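/- For a fixed real α > 0, the function k₁ ↦ (k₁²α + k₁√(k₁²α² + 2k₁α - 1))/(2k₁α - 1) on the domain k₁ > 1/(2α) attains its minimum value (1 + √2)/α at k₁ = 1/α. -/

import Mathlib

/-- For fixed `α > 0`, the function
`k₁ ↦ (k₁²α + k₁√(k₁²α² + 2k₁α - 1))/(2k₁α - 1)` on the domain `k₁ > 1/(2α)` attains its
minimum value `(1 + √2)/α` at `k₁ = 1/α`. -/
theorem min_of_k2_lower_bound (α : ℝ) (hα : 0 < α) :
    (∀ k₁ : ℝ, 1 / (2 * α) < k₁ →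
      (1 + Real.sqrt 2) / α ≤
        (k₁ ^ 2 * α + k₁ * Real.sqrt (k₁ ^ 2 * α ^ 2 + 2 * k₁ * α - 1)) / (2 * k₁ * α - 1)) ∧
    ((1 / α) ^ 2 * α + (1 / α) * Real.sqrt ((1 / α) ^ 2 * α ^ 2 + 2 * (1 / α) * α - 1))
        / (2 * (1 / α) * α - 1) = (1 + Real.sqrt 2) / α := by
  have hα' : α ≠ 0 := ne_of_gt hα
  have h2 : Real.sqrt 2 ^ 2 = 2 := Real.sq_sqrt (by norm_num)
  have h2n : (0:ℝ) ≤ Real.sqrt 2 := Real.sqrt_nonneg 2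
  constructor
  · intro k₁ hk
    rw [div_lt_iff₀ (by positivity)] at hk
    have hd : 0 < 2 * k₁ * α - 1 := by nlinarith
    have hk1 : 0 < k₁ := by nlinarith
    have harg : 0 ≤ k₁ ^ 2 * α ^ 2 + 2 * k₁ * α - 1 := by nlinarith [sq_nonneg (k₁ * α)]
    set s := Real.sqrt (k₁ ^ 2 * α ^ 2 + 2 * k₁ * α - 1) with hsdef
    have hs : 0 ≤ s := Real.sqrt_nonneg _
    have hs2 : s ^ 2 = k₁ ^ 2 * α ^ 2 + 2 * k₁ * α - 1 := Real.sq_sqrt harg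
    have hfac : (k₁ * α * s) ^ 2 -
        ((1 + Real.sqrt 2) * (2 * k₁ * α - 1) - (k₁ * α) ^ 2) ^ 2 =
        (1 + Real.sqrt 2) ^ 2 * (k₁ * α - 1) ^ 2 * (2 * k₁ * α - 1) := by
      linear_combination (k₁ * α) ^ 2 * hs2 - (k₁ * α) ^ 2 * (2 * k₁ * α - 1) * h2
    have key : (1 + Real.sqrt 2) * (2 * k₁ * α - 1) - (k₁ * α) ^ 2 ≤ k₁ * α * s := by
      rcases le_or_gt ((1 + Real.sqrt 2) * (2 * k₁ * α - 1) - (k₁ * α) ^ 2) 0 with h | h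
      · exact h.trans (by positivity)
      · nlinarith [hfac, mul_nonneg (mul_nonneg hk1.le hα.le) hs,
          mul_nonneg (mul_nonneg (by positivity : (0:ℝ) ≤ (1 + Real.sqrt 2) ^ 2)
            (sq_nonneg (k₁ * α - 1))) hd.le]
    rw [div_le_div_iff₀ hα hd]
    nlinarith [key]
  · have harg : (1 / α) ^ 2 * α ^ 2 + 2 * (1 / α) * α - 1 = 2 := by field_simp; norm_num
    rw [harg]
    field_simp
    ring
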